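/- The quartic form M^λ = x⁴ + y⁴ + z⁴ + t⁴ + λ xyzt over an algebraically closed field k of characteristic zero is singular if and only if λ⁴ = 4⁴ = 256. -/
import Mathlib


open MvPolynomial

/-- A quartic form in `k[x,y,z,t]` is singular if its four partial derivatives have a common
zero in `k⁴ \ {0}`, i.e. the projective surface `V(f) ⊆ ℙ³(k)` has a singular point. -/
def MvPolynomial.IsSingularForm {k : Type*} [CommRing k] (f : MvPolynomial (Fin 4) k) : Prop :=
  ∃ p : Fin 4 → k, p ≠ 0 ∧ ∀ i : Fin 4, eval p (pderiv i f) = 0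

/-- the quartic form `M^λ = x⁴ + y⁴ + z⁴ + t⁴ + λxyzt` is singular iff
`λ⁴ = 4⁴ = 256`. -/
theorem stmt_15 {k : Type*} [Field k] [IsAlgClosed k] [CharZero k] (l : k) :
    (X 0 ^ 4 + X 1 ^ 4 + X 2 ^ 4 + X 3 ^ 4 +
        C l * (X 0 * X 1 * X 2 * X 3) : MvPolynomial (Fin 4) k).IsSingularForm ↔
      l ^ 4 = 256 := by
  constructor
  · rintro ⟨p, hp0, h⟩
    have h0 := h 0; have h1 := h 1; have h2 := h 2; have h3 := h 3
    simp [pderiv_X, Pi.single_apply] at h0 h1 h2 h3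
    set a := p 0; set b := p 1; set c := p 2; set d := p 3
    by_cases hm : a * b * c * d = 0
    · exfalso
      have ha : a = 0 := by
        have : a ^ 4 = 0 := by linear_combination a / 4 * h0 - l / 4 * hm
        exact pow_eq_zero_iff (by norm_num) |>.mp this
      have hb : b = 0 := by
        have : b ^ 4 = 0 := by linear_combination b / 4 * h1 - l / 4 * hm
        exact pow_eq_zero_iff (by norm_num) |>.mp this
      have hc : c = 0 := by
        have : c ^ 4 = 0 := by linear_combination c / 4 * h2 - l / 4 * hm
        exact pow_eq_zero_iff (by norm_num) |>.mp this
      have hd : d = 0 := by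
        have : d ^ 4 = 0 := by linear_combination d / 4 * h3 - l / 4 * hm
        exact pow_eq_zero_iff (by norm_num) |>.mp this
      apply hp0
      funext i
      fin_cases i <;> assumption
    · have key : l ^ 4 * (a * b * c * d) ^ 4 = 256 * (a * b * c * d) ^ 4 := by
        linear_combination (-(64 * a * b^4 * c^4 * d^4)) * h0
          + (16 * (l*a*b*c*d) * b * c^4 * d^4) * h1
          + (-(4 * (l*a*b*c*d)^2 * c * d^4)) * h2
          + ((l*a*b*c*d)^3 * d) * h3
      exact mul_right_cancel₀ (pow_ne_zero 4 hm) key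
  · intro hl
    have hl0 : l ≠ 0 := by rintro rfl; norm_num at hl
    refine ⟨![-4 / l, 1, 1, 1], ?_, ?_⟩
    · intro h
      have := congrFun h 1
      simp at this
    · intro i
      fin_cases i
      · simp [pderiv_X, Pi.single_apply]
        field_simp
        linear_combination hl
      · simp [pderiv_X, Pi.single_apply]
        field_simp
        ring
      · simp [pderiv_X, Pi.single_apply]
        field_simp
        ring
      · simp [pderiv_X, Pi.single_apply]
        field_simp
        ring
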